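/- For every natural number n, the matrices of the bi-periodic Jacobsthal matrix sequence satisfy J_{2n+2} = (ab+4)·J_{2n} − 4·J_{2n-2} and J_{2n+3} = (ab+4)·J_{2n+1} − 4·J_{2n-1} for n ≥ 1. -/
import Mathlib

noncomputable def JM (a b : ℝ) : ℕ → Matrix (Fin 2) (Fin 2) ℝ
  | 0 => 1
  | 1 => !![b, 2 * b / a; 1, 0]
  | n + 2 => (if Even (n + 2) then a else b) • JM a b (n + 1) + (2 : ℝ) • JM a b n

lemma JM_even (a b : ℝ) (k : ℕ) :
    JM a b (2 * k + 2) = a • JM a b (2 * k + 1) + (2 : ℝ) • JM a b (2 * k) := by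
  rw [show 2 * k + 2 = (2 * k) + 2 from rfl, JM]
  simp [Nat.even_add, Nat.even_mul]

lemma JM_odd (a b : ℝ) (k : ℕ) :
    JM a b (2 * k + 3) = b • JM a b (2 * k + 2) + (2 : ℝ) • JM a b (2 * k + 1) := by
  rw [show 2 * k + 3 = (2 * k + 1) + 2 from rfl, JM]
  simp [Nat.even_add, Nat.even_mul]

theorem stmt2 (a b : ℝ) (ha : a ≠ 0) (hb : b ≠ 0) (n : ℕ) (hn : 1 ≤ n) :
    JM a b (2 * n + 2) = (a * b + 4) • JM a b (2 * n) - (4 : ℝ) • JM a b (2 * n - 2) ∧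
    JM a b (2 * n + 3) = (a * b + 4) • JM a b (2 * n + 1) - (4 : ℝ) • JM a b (2 * n - 1) := by
  obtain ⟨m, rfl⟩ : ∃ m, n = m + 1 := ⟨n - 1, (Nat.succ_pred_eq_of_pos hn).symm⟩
  have h0 : 2 * (m + 1) + 2 = 2 * m + 4 := by ring
  have h1 : 2 * (m + 1) = 2 * m + 2 := by ring
  have h2 : 2 * m + 2 - 2 = 2 * m := by omega
  have h3 : 2 * m + 2 + 3 = 2 * m + 5 := by omega
  have h4 : 2 * m + 2 + 1 = 2 * m + 3 := by omega
  have h5 : 2 * m + 2 - 1 = 2 * m + 1 := by omega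
  rw [h0, h1, h2, h3, h4, h5]
  have e1 := JM_even a b m
  have e2 := JM_odd a b m
  have e3 := JM_even a b (m + 1)
  have e4 := JM_odd a b (m + 1)
  rw [show 2 * (m+1) + 2 = 2*m + 4 from by ring, show 2*(m+1)+1 = 2*m+3 from by ring,
    show 2*(m+1) = 2*m+2 from by ring] at e3
  rw [show 2 * (m+1) + 3 = 2*m + 5 from by ring, show 2*(m+1)+2 = 2*m+4 from by ring,
    show 2*(m+1)+1 = 2*m+3 from by ring] at e4
  constructor
  · rw [e3, e2, e1]; module
  · rw [e4, e3, e2, e1]; module
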